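/- Let A and B be positive semidefinite matrices partitioned conformally into 2×2 block form A = [[A₁, A₂],[A₂ᵀ, A₃]], B = [[B₁, B₂],[B₂ᵀ, B₃]]. If ⟨A, B⟩ = Tr(AB) = 0, then ⟨A₁, B₁⟩ = ⟨A₃, B₃⟩ = −⟨A₂, B₂⟩. -/

import Mathlib

open Matrix

lemma trace_transpose_mul_self_eq_zero {n p : Type*} [Fintype n] [Fintype p] {M : Matrix n p ℝ}
    (h : (Mᵀ * M).trace = 0) : M = 0 := by
  ext i j
  have hnn : ∀ j ∈ Finset.univ, 0 ≤ ((Mᵀ * M) j j : ℝ) := by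
    intro j _
    simp only [mul_apply, transpose_apply]
    exact Finset.sum_nonneg fun i _ => mul_self_nonneg _
  have := (Finset.sum_eq_zero_iff_of_nonneg hnn).mp h j (Finset.mem_univ j)
  simp only [mul_apply, transpose_apply] at this
  have := (Finset.sum_eq_zero_iff_of_nonneg (fun i _ => mul_self_nonneg (M i j))).mp this i
    (Finset.mem_univ i)
  simpa [mul_self_eq_zero] using this

open scoped MatrixOrder in
lemma psd_mul_eq_zero {n : Type*} [Fintype n] [DecidableEq n] {A B : Matrix n n ℝ}
    (hA : A.PosSemidef) (hB : B.PosSemidef) (h : (A * B).trace = 0) : A * B = 0 := by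
  set S := CFC.sqrt A with hS
  set T := CFC.sqrt B with hT
  have hSsym : Sᵀ = S := (CFC.sqrt_nonneg A).posSemidef.isHermitian
  have hTsym : Tᵀ = T := (CFC.sqrt_nonneg B).posSemidef.isHermitian
  have hSS : S * S = A := CFC.sqrt_mul_sqrt_self A hA.nonneg
  have hTT : T * T = B := CFC.sqrt_mul_sqrt_self B hB.nonneg
  have key : ((T * S)ᵀ * (T * S)).trace = 0 := by
    rw [transpose_mul, hSsym, hTsym]
    calc (S * T * (T * S)).trace = (S * (T * (T * S))).trace := by rw [mul_assoc]
      _ = ((T * (T * S)) * S).trace := by rw [trace_mul_comm]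
      _ = (A * B).trace := by rw [← hSS, ← hTT]; simp only [mul_assoc]; rw [trace_mul_comm]; simp only [mul_assoc]; rw [trace_mul_comm]; simp only [mul_assoc]
      _ = 0 := h
  have hTS : T * S = 0 := trace_transpose_mul_self_eq_zero key
  have hST : S * T = 0 := by
    have := congrArg transpose hTS
    rwa [transpose_mul, hSsym, hTsym, transpose_zero] at this
  rw [← hSS, ← hTT]
  calc S * S * (T * T) = S * (S * T) * T := by simp only [mul_assoc]
    _ = 0 := by rw [hST]; simp

theorem block_psd_orthogonal {m k : ℕ}
    (A₁ : Matrix (Fin m) (Fin m) ℝ) (A₂ : Matrix (Fin m) (Fin k) ℝ)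
    (A₃ : Matrix (Fin k) (Fin k) ℝ)
    (B₁ : Matrix (Fin m) (Fin m) ℝ) (B₂ : Matrix (Fin m) (Fin k) ℝ)
    (B₃ : Matrix (Fin k) (Fin k) ℝ)
    (hA : (Matrix.fromBlocks A₁ A₂ A₂ᵀ A₃).PosSemidef)
    (hB : (Matrix.fromBlocks B₁ B₂ B₂ᵀ B₃).PosSemidef)
    (h0 : ((Matrix.fromBlocks A₁ A₂ A₂ᵀ A₃) * (Matrix.fromBlocks B₁ B₂ B₂ᵀ B₃)).trace = 0) :
    (A₁ * B₁).trace = (A₃ * B₃).trace ∧ (A₁ * B₁).trace = -(A₂ᵀ * B₂).trace := by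
  have hAB := psd_mul_eq_zero hA hB h0
  rw [fromBlocks_multiply] at hAB
  have h11 : A₁ * B₁ + A₂ * B₂ᵀ = 0 := by
    have := congrArg Matrix.toBlocks₁₁ hAB
    simp only [toBlocks_fromBlocks₁₁] at this
    exact this.trans (by ext; rfl)
  have h22 : A₂ᵀ * B₂ + A₃ * B₃ = 0 := by
    have := congrArg Matrix.toBlocks₂₂ hAB
    simp only [toBlocks_fromBlocks₂₂] at this
    exact this.trans (by ext; rfl)
  have ht : (A₂ * B₂ᵀ).trace = (A₂ᵀ * B₂).trace := by
    rw [trace_mul_comm, ← trace_transpose, transpose_mul, transpose_transpose]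
  have e1 : (A₁ * B₁).trace = -(A₂ᵀ * B₂).trace := by
    have := congrArg Matrix.trace h11
    rw [trace_add, trace_zero, ht] at this
    linarith
  have e2 : (A₃ * B₃).trace = -(A₂ᵀ * B₂).trace := by
    have := congrArg Matrix.trace h22
    rw [trace_add, trace_zero] at this
    linarith
  exact ⟨e1.trans e2.symm, e1⟩
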